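/- Let A be a set of commuting diagonalizable automorphisms of a finite-dimensional real vector space, each of whose eigenvalues all have absolute value 1, and suppose each element of A preserves a lattice L. Then the group generated by A is finite. -/

import Mathlib

open Matrix

lemma aux_conj_pow {n : ℕ} (P Y Pinv : Matrix (Fin n) (Fin n) ℂ)
    (h1 : P * Pinv = 1) (h2 : Pinv * P = 1) (k : ℕ) :
    (P * Y * Pinv) ^ k = P * Y ^ k * Pinv := by
  induction k with
  | zero => simp [h1]
  | succ k ih =>
      rw [pow_succ, ih, pow_succ]
      calc P * Y ^ k * Pinv * (P * Y * Pinv) = P * Y ^ k * (Pinv * P) * Y * Pinv := by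
            noncomm_ring
        _ = P * (Y ^ k * Y) * Pinv := by rw [h2]; noncomm_ring

lemma aux_eig {n : ℕ} (a : Matrix (Fin n) (Fin n) ℂ) (P : Matrix (Fin n) (Fin n) ℂ)
    (hP : IsUnit P) (d : Fin n → ℂ) (hd : ∀ i, ‖d i‖ = 1)
    (ha : a = P * Matrix.diagonal d * P⁻¹) (μ : ℂ) (m : Fin n → ℂ)
    (hm : m ∈ Module.End.maxGenEigenspace (Matrix.toLinAlgEquiv' a) μ) :
    a.mulVec m = μ • m ∧ (m ≠ 0 → ‖μ‖ = 1) := by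
  obtain ⟨k, hk⟩ := (Module.End.mem_maxGenEigenspace _ _ _).mp hm
  have hdet : IsUnit P.det := (Matrix.isUnit_iff_isUnit_det P).mp hP
  have hPP : P * P⁻¹ = 1 := Matrix.mul_nonsing_inv P hdet
  have hPP' : P⁻¹ * P = 1 := Matrix.nonsing_inv_mul P hdet
  have hone : P * (μ • (1 : Matrix (Fin n) (Fin n) ℂ)) * P⁻¹
      = μ • (1 : Matrix (Fin n) (Fin n) ℂ) := by
    rw [Matrix.mul_smul, mul_one, Matrix.smul_mul, hPP]
  have hdm : Matrix.diagonal d - μ • (1 : Matrix (Fin n) (Fin n) ℂ)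
      = Matrix.diagonal (fun i => d i - μ) := by
    ext i j
    by_cases h : i = j <;>
      simp [Matrix.diagonal_apply, Matrix.one_apply, h]
  have hsub : a - μ • (1 : Matrix (Fin n) (Fin n) ℂ)
      = P * Matrix.diagonal (fun i => d i - μ) * P⁻¹ := by
    rw [← hdm, Matrix.mul_sub, Matrix.sub_mul, hone, ha]
  have hmap : (Matrix.toLinAlgEquiv' (n := Fin n) (R := ℂ))
        ((a - μ • (1 : Matrix (Fin n) (Fin n) ℂ)) ^ k)
      = (Matrix.toLinAlgEquiv' a - μ • (1 : Module.End ℂ (Fin n → ℂ))) ^ k := by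
    rw [map_pow, map_sub, _root_.map_smul, _root_.map_one]
  have hk' : ((a - μ • (1 : Matrix (Fin n) (Fin n) ℂ)) ^ k).mulVec m = 0 := by
    rw [← Matrix.toLinAlgEquiv'_apply, hmap]; exact hk
  set y := P⁻¹.mulVec m with hy
  have hDk : (Matrix.diagonal (fun i => d i - μ)) ^ k
      = Matrix.diagonal (fun i => (d i - μ) ^ k) := Matrix.diagonal_pow _ _
  have h2 : Matrix.mulVec (Matrix.diagonal fun i => (d i - μ) ^ k) y = 0 := by
    have h3 : P⁻¹.mulVec (((a - μ • (1 : Matrix (Fin n) (Fin n) ℂ)) ^ k).mulVec m) = 0 := by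
      rw [hk', Matrix.mulVec_zero]
    rw [hsub, aux_conj_pow P _ P⁻¹ hPP hPP', hDk] at h3
    rw [Matrix.mulVec_mulVec, ← Matrix.mul_assoc, ← Matrix.mul_assoc, hPP',
      Matrix.one_mul, ← Matrix.mulVec_mulVec] at h3
    exact h3
  have hky : ∀ i, (d i - μ) ^ k * y i = 0 := by
    intro i
    have := congrFun h2 i
    rwa [Matrix.mulVec_diagonal] at this
  have hdy : ∀ i, (d i - μ) * y i = 0 := by
    intro i
    rcases eq_or_ne (y i) 0 with h | h
    · rw [h, mul_zero]
    · rcases mul_eq_zero.mp (hky i) with h' | h'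
      · rw [pow_eq_zero_iff'] at h'
        rw [h'.1, zero_mul]
      · exact absurd h' h
  have hDy : Matrix.mulVec (Matrix.diagonal fun i => d i - μ) y = 0 := by
    funext i
    rw [Matrix.mulVec_diagonal]
    exact hdy i
  have hmain : a.mulVec m - μ • m = 0 := by
    have h4 : (a - μ • (1 : Matrix (Fin n) (Fin n) ℂ)).mulVec m = 0 := by
      rw [hsub, ← Matrix.mulVec_mulVec, ← Matrix.mulVec_mulVec, ← hy, hDy, Matrix.mulVec_zero]
    rwa [Matrix.sub_mulVec, Matrix.smul_mulVec, Matrix.one_mulVec] at h4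
  refine ⟨sub_eq_zero.mp hmain, fun hm0 => ?_⟩
  have hyne : y ≠ 0 := by
    intro h0
    apply hm0
    have hPy : P.mulVec y = m := by rw [hy, Matrix.mulVec_mulVec, hPP, Matrix.one_mulVec]
    rw [← hPy, h0, Matrix.mulVec_zero]
  obtain ⟨i, hi⟩ := Function.ne_iff.mp hyne
  have hiμ : d i = μ := by
    rcases mul_eq_zero.mp (hdy i) with h | h
    · exact sub_eq_zero.mp h
    · exact absurd h hi
  rw [← hiμ]
  exact hd i


lemma aux_basis {n : ℕ} (A : Set (Matrix.GeneralLinearGroup (Fin n) ℝ))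
    (hcomm : ∀ a ∈ A, ∀ b ∈ A, a * b = b * a)
    (hdiag : ∀ a ∈ A, ∃ P : Matrix (Fin n) (Fin n) ℂ, IsUnit P ∧
      ∃ d : Fin n → ℂ, (∀ i, ‖d i‖ = 1) ∧
        ((a : Matrix (Fin n) (Fin n) ℝ).map (Complex.ofReal)) =
          P * Matrix.diagonal d * P⁻¹) :
    ∃ (κ : Type) (_ : Fintype κ) (v : Module.Basis κ ℂ (Fin n → ℂ)),
      ∀ (k : κ) (a : Matrix.GeneralLinearGroup (Fin n) ℝ), a ∈ A → ∃ c : ℂ,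
        ‖c‖ = 1 ∧
        ((a : Matrix (Fin n) (Fin n) ℝ).map Complex.ofReal).mulVec (v k) = c • v k := by
  classical
  set matC : Matrix.GeneralLinearGroup (Fin n) ℝ → Matrix (Fin n) (Fin n) ℂ :=
    fun g => (g : Matrix (Fin n) (Fin n) ℝ).map Complex.ofReal with hmatC
  set f : A → Module.End ℂ (Fin n → ℂ) :=
    fun a => Matrix.toLinAlgEquiv' (matC ↑a) with hf
  have hcomm' : ∀ i j : A, Commute (f i) (f j) := by
    intro i j
    have h1 : (i : Matrix.GeneralLinearGroup (Fin n) ℝ) * ↑j = ↑j * ↑i :=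
      hcomm _ i.2 _ j.2
    have h2 : matC ↑i * matC ↑j = matC ↑j * matC ↑i := by
      have := congrArg Units.val h1
      simp only [Units.val_mul] at this
      have hmul : ∀ M N : Matrix (Fin n) (Fin n) ℝ,
          (M * N).map Complex.ofReal = M.map Complex.ofReal * N.map Complex.ofReal :=
        fun M N => Matrix.map_mul (f := Complex.ofRealHom)
      simp only [hmatC]
      rw [← hmul, ← hmul, this]
    show f i * f j = f j * f i
    simp only [hf]
    rw [← _root_.map_mul, ← _root_.map_mul, h2]
  have htop : ∀ a : A, ⨆ μ, Module.End.maxGenEigenspace (f a) μ = ⊤ := fun a =>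
    Module.End.iSup_maxGenEigenspace_eq_top (f a)
  have hT : ⨆ χ : A → ℂ, ⨅ a, Module.End.maxGenEigenspace (f a) (χ a) = ⊤ :=
    Module.End.iSup_iInf_maxGenEigenspace_eq_top_of_iSup_maxGenEigenspace_eq_top_of_commute
      f (fun i j _ => hcomm' i j) htop
  have hind : iSupIndep fun χ : A → ℂ => ⨅ a, Module.End.maxGenEigenspace (f a) (χ a) :=
    Module.End.independent_iInf_maxGenEigenspace_of_forall_mapsTo f
      (fun i j φ => Module.End.mapsTo_maxGenEigenspace_of_comm (hcomm' j i) φ)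
  have hInternal : DirectSum.IsInternal
      (fun χ : A → ℂ => ⨅ a, Module.End.maxGenEigenspace (f a) (χ a)) :=
    DirectSum.isInternal_submodule_of_iSupIndep_of_iSup_eq_top hind hT
  set bases := fun χ : A → ℂ =>
    Module.Free.chooseBasis ℂ ↥(⨅ a, Module.End.maxGenEigenspace (f a) (χ a)) with hbases
  set bV := hInternal.collectedBasis bases with hbV
  have : Fintype (Σ χ : A → ℂ, Module.Free.ChooseBasisIndex ℂ
      ↥(⨅ a, Module.End.maxGenEigenspace (f a) (χ a))) :=
    FiniteDimensional.fintypeBasisIndex bV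
  refine ⟨_, this, bV, ?_⟩
  rintro ⟨χ, j⟩ a ha
  obtain ⟨P, hP, d, hd, ha'⟩ := hdiag a ha
  have hmem : bV ⟨χ, j⟩ ∈ Module.End.maxGenEigenspace (f ⟨a, ha⟩) (χ ⟨a, ha⟩) := by
    have h0 := hInternal.collectedBasis_mem bases ⟨χ, j⟩
    exact (iInf_le (fun a' : A => Module.End.maxGenEigenspace (f a') (χ a')) ⟨a, ha⟩) h0
  have := aux_eig (matC a) P hP d hd ha' (χ ⟨a, ha⟩) (bV ⟨χ, j⟩) hmem
  exact ⟨χ ⟨a, ha⟩, this.2 (bV.ne_zero _), this.1⟩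

theorem finite_group_of_commuting_unit_eigenvalue_lattice_preserving (n : ℕ)
    (A : Set (Matrix.GeneralLinearGroup (Fin n) ℝ))
    (hcomm : ∀ a ∈ A, ∀ b ∈ A, a * b = b * a)
    (hdiag : ∀ a ∈ A, ∃ P : Matrix (Fin n) (Fin n) ℂ, IsUnit P ∧
      ∃ d : Fin n → ℂ, (∀ i, ‖d i‖ = 1) ∧
        ((a : Matrix (Fin n) (Fin n) ℝ).map (Complex.ofReal)) =
          P * Matrix.diagonal d * P⁻¹)
    (L : AddSubgroup (Fin n → ℝ)) (b : Module.Basis (Fin n) ℤ L)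
    (hspan : Submodule.span ℝ (L : Set (Fin n → ℝ)) = ⊤)
    (hpres : ∀ a ∈ A, ∀ v ∈ L, (a : Matrix (Fin n) (Fin n) ℝ).mulVec v ∈ L) :
    (Subgroup.closure A : Set (Matrix.GeneralLinearGroup (Fin n) ℝ)).Finite := by
  classical
  have hmapmul : ∀ M N' : Matrix (Fin n) (Fin n) ℝ,
      (M * N').map Complex.ofReal = M.map Complex.ofReal * N'.map Complex.ofReal :=
    fun M N' => Matrix.map_mul (f := Complex.ofRealHom)
  obtain ⟨κ, hκ, v, hv⟩ := aux_basis A hcomm hdiag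
  set w : Fin n → (Fin n → ℝ) := fun i => ((b i : L) : Fin n → ℝ) with hw
  have hwL : ∀ i, w i ∈ L := fun i => (b i).2
  -- ℤ-linear combinations of elements of L are in L
  have hcombo : ∀ (m : Fin n → ℤ) (u : Fin n → (Fin n → ℝ)), (∀ i, u i ∈ L) →
      (∑ i, (m i : ℝ) • u i) ∈ L := by
    intro m u hu
    refine AddSubgroup.sum_mem L fun i _ => ?_
    rw [Int.cast_smul_eq_zsmul ℝ]
    exact AddSubgroup.zsmul_mem L (hu i) (m i)
  -- every element of L is the ℤ-combination of the w's given by b.repr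
  have hrep : ∀ (x : Fin n → ℝ) (hx : x ∈ L),
      x = ∑ i, ((b.repr ⟨x, hx⟩ i : ℤ) : ℝ) • w i := by
    intro x hx
    have h := congrArg L.subtype (b.sum_repr ⟨x, hx⟩)
    rw [map_sum] at h
    simp only [map_zsmul] at h
    refine Eq.trans h.symm (Finset.sum_congr rfl fun i _ => ?_)
    rw [Int.cast_smul_eq_zsmul ℝ]
    rfl
  -- real basis from w
  have hle : ⊤ ≤ Submodule.span ℝ (Set.range w) := by
    rw [← hspan]
    refine Submodule.span_le.mpr fun x hx => ?_
    rw [hrep x hx]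
    exact Submodule.sum_mem _ fun i _ => Submodule.smul_mem _ _
      (Submodule.subset_span ⟨i, rfl⟩)
  have hcard : Fintype.card (Fin n) = Module.finrank ℝ (Fin n → ℝ) := by
    simp [Module.finrank_fin_fun]
  set bR : Module.Basis (Fin n) ℝ (Fin n → ℝ) := basisOfTopLeSpanOfCardEqFinrank w hle hcard with hbR
  have hbRw : ∀ i, bR i = w i := fun i =>
    congrFun (coe_basisOfTopLeSpanOfCardEqFinrank w hle hcard) i
  -- real coordinates of lattice elements are the integer coordinates
  have hBRrep : ∀ (x : Fin n → ℝ) (hx : x ∈ L) (i : Fin n),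
      bR.repr x i = ((b.repr ⟨x, hx⟩ i : ℤ) : ℝ) := by
    intro x hx i
    have h1 : x = ∑ j, ((b.repr ⟨x, hx⟩ j : ℤ) : ℝ) • bR j := by
      conv_lhs => rw [hrep x hx]
      exact Finset.sum_congr rfl fun j _ => by rw [hbRw]
    conv_lhs => rw [h1]
    rw [bR.repr_sum_self]
  -- a matrix sending the w's into L sends L into L
  have hstep : ∀ (g : Matrix (Fin n) (Fin n) ℝ), (∀ j, g.mulVec (w j) ∈ L) →
      ∀ x ∈ L, g.mulVec x ∈ L := by
    intro g hg x hx
    rw [hrep x hx]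
    have h2 : g *ᵥ (∑ i, ((b.repr ⟨x, hx⟩ i : ℤ) : ℝ) • w i)
        = ∑ i, ((b.repr ⟨x, hx⟩ i : ℤ) : ℝ) • (g *ᵥ w i) := by
      rw [← Matrix.mulVecLin_apply, map_sum]
      exact Finset.sum_congr rfl fun i _ => by
        rw [_root_.map_smul, Matrix.mulVecLin_apply]
    rw [h2]
    exact hcombo _ _ fun i => hg i
  -- inverses of lattice-preserving elements of A preserve the lattice
  have hinvpres : ∀ a ∈ A, ∀ x ∈ L, ((a⁻¹ : Matrix.GeneralLinearGroup (Fin n) ℝ) :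
      Matrix (Fin n) (Fin n) ℝ).mulVec x ∈ L := by
    intro a ha
    set M : Matrix (Fin n) (Fin n) ℤ := Matrix.of fun i j =>
      b.repr ⟨(a : Matrix (Fin n) (Fin n) ℝ) *ᵥ w j, hpres a ha _ (hwL j)⟩ i with hM
    have haw : ∀ j, (a : Matrix (Fin n) (Fin n) ℝ) *ᵥ w j
        = ∑ i, ((M i j : ℤ) : ℝ) • w i := fun j => hrep _ _
    -- |det a| = 1
    have hdet1 : |(a : Matrix (Fin n) (Fin n) ℝ).det| = 1 := by
      obtain ⟨P, hP, d, hd, ha'⟩ := hdiag a ha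
      have h1 : (((a : Matrix (Fin n) (Fin n) ℝ).det : ℝ) : ℂ) = ∏ i, d i := by
        have h2 : (((a : Matrix (Fin n) (Fin n) ℝ)).map Complex.ofReal).det
            = ∏ i, d i := by
          rw [ha', Matrix.det_conj hP, Matrix.det_diagonal]
        rw [← h2]
        exact RingHom.map_det Complex.ofRealHom _
      have h3 : ‖(((a : Matrix (Fin n) (Fin n) ℝ).det : ℝ) : ℂ)‖ = 1 := by
        rw [h1, norm_prod]
        simp [hd]
      rwa [Complex.norm_real, Real.norm_eq_abs] at h3
    -- the integer matrix has determinant ±1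
    have hTM : LinearMap.toMatrix bR bR (Matrix.toLin' (a : Matrix (Fin n) (Fin n) ℝ))
        = M.map (Int.cast : ℤ → ℝ) := by
      ext i j
      rw [LinearMap.toMatrix_apply, Matrix.toLin'_apply, hbRw, Matrix.map_apply]
      exact hBRrep _ _ i
    have hdetM : ((M.det : ℤ) : ℝ) = (a : Matrix (Fin n) (Fin n) ℝ).det := by
      have h4 := LinearMap.det_toMatrix bR (Matrix.toLin' (a : Matrix (Fin n) (Fin n) ℝ))
      rw [hTM, LinearMap.det_toLin'] at h4
      rw [← h4]
      have h8 := RingHom.map_det (Int.castRingHom ℝ) M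
      simp only [RingHom.mapMatrix_apply, eq_intCast, Int.coe_castRingHom] at h8
      rw [show (Int.cast : ℤ → ℝ) = fun x : ℤ => (x : ℝ) from rfl]
      exact h8
    have hMdet : IsUnit M.det := by
      have h5 : |M.det| = 1 := by
        have h6 : |((M.det : ℤ) : ℝ)| = 1 := by rw [hdetM]; exact hdet1
        exact_mod_cast h6
      rw [Int.isUnit_iff]
      exact (abs_eq (by norm_num : (0:ℤ) ≤ 1)).mp h5
    obtain ⟨u, hu⟩ := (Matrix.isUnit_iff_isUnit_det M).mpr hMdet
    set Nn : Matrix (Fin n) (Fin n) ℤ := ↑u⁻¹ with hNn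
    have hMN : M * Nn = 1 := by rw [← hu, hNn]; exact u.mul_inv
    have h7 : ∀ j, (a : Matrix (Fin n) (Fin n) ℝ) *ᵥ (∑ i, ((Nn i j : ℤ) : ℝ) • w i)
        = w j := by
      intro j
      have hlin : (a : Matrix (Fin n) (Fin n) ℝ) *ᵥ (∑ i, ((Nn i j : ℤ) : ℝ) • w i)
          = ∑ i, ((Nn i j : ℤ) : ℝ) • ((a : Matrix (Fin n) (Fin n) ℝ) *ᵥ w i) := by
        rw [← Matrix.mulVecLin_apply, map_sum]
        exact Finset.sum_congr rfl fun i _ => by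
          rw [_root_.map_smul, Matrix.mulVecLin_apply]
      rw [hlin]
      calc ∑ i, ((Nn i j : ℤ) : ℝ) • ((a : Matrix (Fin n) (Fin n) ℝ) *ᵥ w i)
          = ∑ i, ∑ k, (((M k i * Nn i j : ℤ)) : ℝ) • w k := by
            refine Finset.sum_congr rfl fun i _ => ?_
            rw [haw i, Finset.smul_sum]
            refine Finset.sum_congr rfl fun k _ => ?_
            rw [smul_smul]
            push_cast
            ring_nf
        _ = ∑ k, (((M * Nn) k j : ℤ) : ℝ) • w k := by
            rw [Finset.sum_comm]
            refine Finset.sum_congr rfl fun k _ => ?_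
            rw [← Finset.sum_smul, Matrix.mul_apply]
            push_cast
            rfl
        _ = w j := by
            rw [hMN]
            simp [Matrix.one_apply, apply_ite]
    intro x hx
    refine hstep _ (fun j => ?_) x hx
    have h9 := congrArg (fun z => ((a⁻¹ : Matrix.GeneralLinearGroup (Fin n) ℝ) :
      Matrix (Fin n) (Fin n) ℝ) *ᵥ z) (h7 j)
    simp only [Matrix.mulVec_mulVec] at h9
    have h10 : ((a⁻¹ : Matrix.GeneralLinearGroup (Fin n) ℝ) :
        Matrix (Fin n) (Fin n) ℝ) * (a : Matrix (Fin n) (Fin n) ℝ) = 1 := a.inv_mul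
    rw [h10, Matrix.one_mulVec] at h9
    rw [← h9]
    exact hcombo _ _ hwL
  -- the key invariants, by induction on the closure
  have hkey : ∀ g ∈ Subgroup.closure A,
      (∀ k : κ, ∃ c : ℂ, ‖c‖ = 1 ∧
        ((g : Matrix (Fin n) (Fin n) ℝ).map Complex.ofReal).mulVec (v k) = c • v k) ∧
      (∀ x ∈ L, (g : Matrix (Fin n) (Fin n) ℝ).mulVec x ∈ L) ∧
      (∀ x ∈ L, ((g⁻¹ : Matrix.GeneralLinearGroup (Fin n) ℝ) :
          Matrix (Fin n) (Fin n) ℝ).mulVec x ∈ L) := by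
    intro g hg
    refine Subgroup.closure_induction
      (fun a ha => ⟨fun k => hv k a ha, hpres a ha, hinvpres a ha⟩) ?_ ?_ ?_ hg
    · refine ⟨fun k => ⟨1, by simp, ?_⟩, fun z hz => ?_, fun z hz => ?_⟩
      · rw [Units.val_one, Matrix.map_one Complex.ofReal Complex.ofReal_zero
          Complex.ofReal_one, Matrix.one_mulVec, one_smul]
      · rwa [Units.val_one, Matrix.one_mulVec]
      · rwa [inv_one, Units.val_one, Matrix.one_mulVec]
    · rintro x y hxm hym ⟨px1, px2, px3⟩ ⟨py1, py2, py3⟩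
      refine ⟨fun k => ?_, fun z hz => ?_, fun z hz => ?_⟩
      · obtain ⟨cx, hcx1, hcx2⟩ := px1 k
        obtain ⟨cy, hcy1, hcy2⟩ := py1 k
        refine ⟨cx * cy, by rw [norm_mul, hcx1, hcy1, one_mul], ?_⟩
        rw [Units.val_mul, hmapmul, ← Matrix.mulVec_mulVec, hcy2, Matrix.mulVec_smul,
          hcx2, smul_smul, mul_comm cy cx]
      · rw [Units.val_mul, ← Matrix.mulVec_mulVec]
        exact px2 _ (py2 z hz)
      · rw [_root_.mul_inv_rev, Units.val_mul, ← Matrix.mulVec_mulVec]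
        exact py3 _ (px3 z hz)
    · rintro x hxm ⟨px1, px2, px3⟩
      refine ⟨fun k => ?_, px3, ?_⟩
      · obtain ⟨c, hc1, hc2⟩ := px1 k
        have hc0 : c ≠ 0 := by
          intro h
          rw [h] at hc1
          simp at hc1
        refine ⟨c⁻¹, by rw [norm_inv, hc1, inv_one], ?_⟩
        have h10 : ((x⁻¹ : Matrix.GeneralLinearGroup (Fin n) ℝ) :
            Matrix (Fin n) (Fin n) ℝ).map Complex.ofReal *ᵥ
            (((x : Matrix (Fin n) (Fin n) ℝ)).map Complex.ofReal *ᵥ v k) = v k := by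
          rw [Matrix.mulVec_mulVec, ← hmapmul, x.inv_mul, Matrix.map_one Complex.ofReal
            Complex.ofReal_zero Complex.ofReal_one, Matrix.one_mulVec]
        rw [hc2, Matrix.mulVec_smul] at h10
        calc ((x⁻¹ : Matrix.GeneralLinearGroup (Fin n) ℝ) :
              Matrix (Fin n) (Fin n) ℝ).map Complex.ofReal *ᵥ v k
            = c⁻¹ • (c • (((x⁻¹ : Matrix.GeneralLinearGroup (Fin n) ℝ) :
              Matrix (Fin n) (Fin n) ℝ).map Complex.ofReal *ᵥ v k)) :=
              (inv_smul_smul₀ hc0 _).symm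
          _ = c⁻¹ • v k := by rw [h10]
      · intro z hz
        rw [inv_inv]
        exact px2 z hz
  -- entry bound from the eigenbasis
  set C : ℝ := ∑ j : Fin n, ∑ i : Fin n, ∑ k : κ,
    ‖v.repr (Pi.single j 1) k‖ * ‖v k i‖ with hC
  have hbound : ∀ (g : Matrix (Fin n) (Fin n) ℝ),
      (∀ k : κ, ∃ c : ℂ, ‖c‖ = 1 ∧
        (g.map Complex.ofReal).mulVec (v k) = c • v k) →
      ∀ i j, |g i j| ≤ C := by
    intro g hdg i j
    choose c hc1 hc2 using hdg
    have hsingle : (Pi.single j 1 : Fin n → ℂ) = ∑ k, v.repr (Pi.single j 1) k • v k :=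
      (v.sum_repr _).symm
    have h1 : (g.map Complex.ofReal) *ᵥ (Pi.single j 1 : Fin n → ℂ)
        = ∑ k, (v.repr (Pi.single j 1) k * c k) • v k := by
      conv_lhs => rw [hsingle]
      rw [← Matrix.mulVecLin_apply, map_sum]
      refine Finset.sum_congr rfl fun k _ => ?_
      rw [_root_.map_smul, Matrix.mulVecLin_apply, hc2 k, smul_smul]
    have h2 : ((g.map Complex.ofReal) *ᵥ (Pi.single j 1 : Fin n → ℂ)) i
        = Complex.ofReal (g i j) := by
      rw [Matrix.mulVec_single]
      simp [Matrix.map_apply]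
    have h3 : Complex.ofReal (g i j)
        = ∑ k, (v.repr (Pi.single j 1) k * c k) * v k i := by
      rw [← h2, h1]
      simp [Finset.sum_apply, Pi.smul_apply, smul_eq_mul]
    have h4 : |g i j| ≤ ∑ k, ‖v.repr (Pi.single j 1) k‖
        * ‖v k i‖ := by
      rw [← Real.norm_eq_abs, ← Complex.norm_real, h3]
      refine le_trans (norm_sum_le _ _) (le_of_eq ?_)
      refine Finset.sum_congr rfl fun k _ => ?_
      rw [norm_mul, norm_mul, hc1 k, mul_one]
    refine le_trans h4 ?_
    rw [hC]
    have hterm : ∀ (j' i' : Fin n), 0 ≤ ∑ k : κ,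
        ‖v.repr (Pi.single j' 1) k‖ * ‖v k i'‖ :=
      fun j' i' => Finset.sum_nonneg fun k _ =>
        mul_nonneg (norm_nonneg _) (norm_nonneg _)
    calc (∑ k : κ, ‖v.repr (Pi.single j 1) k‖ * ‖v k i‖)
        ≤ ∑ i' : Fin n, ∑ k : κ,
            ‖v.repr (Pi.single j 1) k‖ * ‖v k i'‖ :=
          Finset.single_le_sum (fun i' _ => hterm j i') (Finset.mem_univ i)
      _ ≤ ∑ j' : Fin n, ∑ i' : Fin n, ∑ k : κ,
            ‖v.repr (Pi.single j' 1) k‖ * ‖v k i'‖ :=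
          Finset.single_le_sum
            (fun j' _ => Finset.sum_nonneg fun i' _ => hterm j' i') (Finset.mem_univ j)
  -- bound on the integer coordinates
  set D : ℝ := ∑ i : Fin n, ∑ j : Fin n, |bR.repr (Pi.single j 1) i| with hD
  set W : ℝ := ∑ j : Fin n, ∑ i : Fin n, |w j i| with hW
  set N : ℤ := ⌈C * W * D⌉ with hN
  have hcoordbound : ∀ (x : Fin n → ℝ) (hx : x ∈ L), (∀ i, |x i| ≤ C * W) →
      ∀ i, |b.repr ⟨x, hx⟩ i| ≤ N := by
    intro x hx hxb i
    have hCW : 0 ≤ C * W := le_trans (abs_nonneg _) (hxb i)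
    have hpi : x = ∑ j, x j • (Pi.single j 1 : Fin n → ℝ) := by
      conv_lhs => rw [pi_eq_sum_univ x]
      refine Finset.sum_congr rfl fun j _ => ?_
      congr 1
      ext j'
      simp [Pi.single_apply, eq_comm]
    have h1 : bR.repr x i = ∑ j, x j * bR.repr (Pi.single j 1) i := by
      conv_lhs => rw [hpi]
      rw [map_sum, Finsupp.finset_sum_apply]
      refine Finset.sum_congr rfl fun j _ => ?_
      rw [_root_.map_smul, Finsupp.smul_apply, smul_eq_mul]
    have h2 : |bR.repr x i| ≤ (C * W) * D := by
      calc |bR.repr x i| = |∑ j, x j * bR.repr (Pi.single j 1) i| := by rw [h1]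
        _ ≤ ∑ j, |x j * bR.repr (Pi.single j 1) i| := Finset.abs_sum_le_sum_abs _ _
        _ ≤ ∑ j, (C * W) * |bR.repr (Pi.single j 1) i| := Finset.sum_le_sum fun j _ => by
            rw [abs_mul]
            exact mul_le_mul_of_nonneg_right (hxb j) (abs_nonneg _)
        _ = (C * W) * ∑ j, |bR.repr (Pi.single j 1) i| := (Finset.mul_sum _ _ _).symm
        _ ≤ (C * W) * D := mul_le_mul_of_nonneg_left (by
            rw [hD]
            exact Finset.single_le_sum
              (f := fun i' => ∑ j, |bR.repr (Pi.single j 1) i'|)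
              (fun i' _ => Finset.sum_nonneg fun j _ => abs_nonneg _)
              (Finset.mem_univ i)) hCW
    rw [hBRrep x hx i] at h2
    have h4 : ((|b.repr ⟨x, hx⟩ i| : ℤ) : ℝ) ≤ ((N : ℤ) : ℝ) := by
      rw [Int.cast_abs, hN]
      exact le_trans h2 (Int.le_ceil _)
    exact_mod_cast h4
  -- image vectors are bounded
  have himgbound : ∀ g ∈ Subgroup.closure A, ∀ j i,
      |(g : Matrix (Fin n) (Fin n) ℝ).mulVec (w j) i| ≤ C * W := by
    intro g hg j i
    have h1 := hbound _ (hkey g hg).1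
    have hCnn : 0 ≤ C := by
      rw [hC]
      positivity
    have h2 : (g : Matrix (Fin n) (Fin n) ℝ).mulVec (w j) i
        = ∑ k, (g : Matrix (Fin n) (Fin n) ℝ) i k * w j k := rfl
    calc |(g : Matrix (Fin n) (Fin n) ℝ).mulVec (w j) i|
        = |∑ k, (g : Matrix (Fin n) (Fin n) ℝ) i k * w j k| := by rw [h2]
      _ ≤ ∑ k, |(g : Matrix (Fin n) (Fin n) ℝ) i k * w j k| :=
          Finset.abs_sum_le_sum_abs _ _
      _ ≤ ∑ k, C * |w j k| := Finset.sum_le_sum fun k _ => by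
          rw [abs_mul]
          exact mul_le_mul_of_nonneg_right (h1 i k) (abs_nonneg _)
      _ = C * ∑ k, |w j k| := (Finset.mul_sum _ _ _).symm
      _ ≤ C * W := mul_le_mul_of_nonneg_left (by
          rw [hW]
          exact Finset.single_le_sum
            (f := fun j' => ∑ k, |w j' k|)
            (fun j' _ => Finset.sum_nonneg fun k _ => abs_nonneg _)
            (Finset.mem_univ j)) hCnn
  -- the injection
  set S := (Subgroup.closure A : Set (Matrix.GeneralLinearGroup (Fin n) ℝ)) with hS
  have hmemL : ∀ (g : S) (j : Fin n),
      ((g : Matrix.GeneralLinearGroup (Fin n) ℝ) :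
        Matrix (Fin n) (Fin n) ℝ).mulVec (w j) ∈ L :=
    fun g j => (hkey g g.2).2.1 (w j) (hwL j)
  set ψ : S → (Fin n → Fin n → Set.Icc (-N) N) := fun g j i =>
    ⟨b.repr ⟨_, hmemL g j⟩ i, by
      have h1 := hcoordbound _ (hmemL g j) (fun i' => himgbound _ g.2 j i') i
      rw [Set.mem_Icc]
      exact abs_le.mp h1⟩ with hψ
  have hinj : Function.Injective ψ := by
    intro g g' h
    have h2 : ∀ j, ((g : Matrix.GeneralLinearGroup (Fin n) ℝ) :
        Matrix (Fin n) (Fin n) ℝ) *ᵥ w j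
        = ((g' : Matrix.GeneralLinearGroup (Fin n) ℝ) :
        Matrix (Fin n) (Fin n) ℝ) *ᵥ w j := by
      intro j
      rw [hrep _ (hmemL g j), hrep _ (hmemL g' j)]
      refine Finset.sum_congr rfl fun i _ => ?_
      have h5 := congrFun (congrFun h j) i
      have h6 : (b.repr ⟨_, hmemL g j⟩ i) = (b.repr ⟨_, hmemL g' j⟩ i) :=
        Subtype.ext_iff.mp h5
      rw [h6]
    have h3 : Matrix.toLin' ((g : Matrix.GeneralLinearGroup (Fin n) ℝ) :
        Matrix (Fin n) (Fin n) ℝ)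
        = Matrix.toLin' ((g' : Matrix.GeneralLinearGroup (Fin n) ℝ) :
        Matrix (Fin n) (Fin n) ℝ) := by
      refine bR.ext fun i => ?_
      rw [Matrix.toLin'_apply, Matrix.toLin'_apply, hbRw]
      exact h2 i
    exact Subtype.ext (Units.ext (Matrix.toLin'.injective h3))
  have : Finite S := Finite.of_injective ψ hinj
  exact Set.toFinite S
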